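/- arXiv:1011.0592 — 2 statements merged into one kernel-verified Lean document; each statement's English description precedes it below -/
import Mathlib

section
/- For every bounded measurable function h : ℝ → ℝ one has E[h(Y_1)] = E[h(Z)·w(G(Z))], where G(z) = P(Z ≤ z) is the cumulative distribution function of Z and w(u) = 1/Ṁ(M^{−1}(1 − u)) for u ∈ [0,1]. -/
open MeasureTheory ProbabilityTheory

section PileupAux

open Set Filter Topology
open scoped ENNReal NNReal

lemma pileup_map_cdf (κ : Measure ℝ) [IsProbabilityMeasure κ] (F : ℝ → ℝ)
    (hF : ∀ z, κ (Iic z) = ENNReal.ofReal (F z)) (hFc : Continuous F)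
    (hF0 : ∀ z, 0 ≤ F z) (hF1 : ∀ z, F z ≤ 1) (hFm : Monotone F) :
    Measure.map F κ = volume.restrict (Ioc (0:ℝ) 1) := by
  have hmeas : Measurable F := hFc.measurable
  have : IsProbabilityMeasure (Measure.map F κ) :=
    Measure.isProbabilityMeasure_map hmeas.aemeasurable
  refine Measure.ext_of_Iic _ _ (fun u => ?_)
  rw [Measure.map_apply hmeas measurableSet_Iic]
  have hrhs : volume.restrict (Ioc (0:ℝ) 1) (Iic u) = ENNReal.ofReal (min u 1) := by
    rw [Measure.restrict_apply measurableSet_Iic]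
    have : Iic u ∩ Ioc (0:ℝ) 1 = Ioc 0 (min u 1) := by
      ext x; simp only [mem_inter_iff, mem_Iic, mem_Ioc, le_min_iff, mem_setOf_eq]
      tauto
    rw [this, Real.volume_Ioc]
    congr 1; ring
  rw [hrhs]
  rcases lt_or_ge u 0 with hu | hu
  · have : F ⁻¹' Iic u = ∅ := by
      ext y; simp only [mem_preimage, mem_Iic, mem_empty_iff_false, iff_false, not_le]
      exact lt_of_lt_of_le hu (hF0 y)
    rw [this, measure_empty]
    symm
    rw [ENNReal.ofReal_eq_zero]
    exact le_trans (min_le_left _ _) hu.le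
  rcases le_or_gt 1 u with hu1 | hu1
  · have : F ⁻¹' Iic u = univ := by
      ext y; simp only [mem_preimage, mem_Iic, mem_univ, iff_true]
      exact le_trans (hF1 y) hu1
    rw [this, min_eq_right hu1]
    simp
  -- main case : 0 ≤ u < 1
  rw [min_eq_left hu1.le]
  set A := F ⁻¹' Iic u with hA
  have hAclosed : IsClosed A := isClosed_Iic.preimage hFc
  -- A is bounded above
  obtain ⟨b, hb⟩ : ∃ b, ENNReal.ofReal u < κ (Iic b) := by
    have h1 : ENNReal.ofReal u < κ univ := by
      rw [measure_univ]; exact ENNReal.ofReal_lt_one.2 hu1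
    exact ((tendsto_order.1 (tendsto_measure_Iic_atTop κ)).1 _ h1).exists
  have hFb : u < F b := by
    by_contra hcon
    push_neg at hcon
    exact absurd (ENNReal.ofReal_le_ofReal hcon) (by rw [← hF b]; exact not_le.2 hb)
  have hbdd : BddAbove A := by
    refine ⟨b, fun y hy => ?_⟩
    by_contra hyb
    push_neg at hyb
    exact absurd (le_trans (hFm hyb.le) hy) (not_le.2 hFb)
  rcases eq_empty_or_nonempty A with hAe | hAne
  · -- then u must be 0
    have hu0 : u = 0 := by
      rcases eq_or_lt_of_le hu with h | h
      · exact h.symm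
      · exfalso
        -- find a with F a < u
        obtain ⟨y, hy⟩ : ∃ y, 1 - ENNReal.ofReal u < κ (Ici y) := by
          have h1 : 1 - ENNReal.ofReal u < κ univ := by
            rw [measure_univ]
            exact ENNReal.sub_lt_self ENNReal.one_ne_top one_ne_zero
              (by simpa using (ENNReal.ofReal_pos.2 h).ne')
          exact ((tendsto_order.1 (tendsto_measure_Ici_atBot κ)).1 _ h1).exists
        have h2 : κ (Iic (y - 1)) < ENNReal.ofReal u := by
          have hsub : Iic (y - 1) ⊆ (Ici y)ᶜ := by
            intro x hx; simp only [mem_compl_iff, mem_Ici, not_le]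
            have : x ≤ y - 1 := hx
            linarith
          have h3 : κ (Iic (y - 1)) ≤ 1 - κ (Ici y) := by
            calc κ (Iic (y - 1)) ≤ κ ((Ici y)ᶜ) := measure_mono hsub
            _ = 1 - κ (Ici y) := by
              rw [measure_compl measurableSet_Ici (measure_ne_top κ _), measure_univ]
          refine lt_of_le_of_lt h3 ?_
          rw [ENNReal.sub_lt_iff_lt_right (measure_ne_top κ _) prob_le_one]
          rw [ENNReal.sub_lt_iff_lt_right ENNReal.ofReal_ne_top
            (ENNReal.ofReal_le_one.2 hu1.le)] at hy
          rw [add_comm]; exact hy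
        have : F (y - 1) < u := by
          have := hF (y - 1) ▸ h2
          exact (ENNReal.ofReal_lt_ofReal_iff_of_nonneg (hF0 _)).1 this
        have hmem : (y - 1) ∈ A := mem_preimage.2 (le_of_lt this)
        rw [hAe] at hmem
        exact notMem_empty _ hmem
    rw [hAe, hu0]
    simp
  · have haA : sSup A ∈ A := hAclosed.csSup_mem hAne hbdd
    set a := sSup A with ha
    have hAIic : A = Iic a := by
      apply subset_antisymm
      · exact fun y hy => le_csSup hbdd hy
      · intro y hy
        exact mem_preimage.2 (le_trans (hFm hy) haA)
    have hFa : F a = u := by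
      refine le_antisymm haA ?_
      by_contra hcon
      push_neg at hcon
      obtain ⟨ε, hε, hball⟩ := Metric.isOpen_iff.1 (isOpen_Iio.preimage hFc) a
        (by simpa [mem_preimage] using hcon)
      have hmem : a + ε / 2 ∈ A := by
        have hmb : a + ε / 2 ∈ Metric.ball a ε := by
          rw [Metric.mem_ball, Real.dist_eq, add_sub_cancel_left,
            abs_of_pos (by linarith : (0:ℝ) < ε / 2)]
          linarith
        have h5 : F (a + ε / 2) < u := mem_preimage.1 (hball hmb)
        exact mem_preimage.2 h5.le
      have := le_csSup hbdd hmem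
      linarith
    rw [hAIic, hF a, hFa]

lemma pileup_inner (κ : Measure ℝ) [IsProbabilityMeasure κ] (F : ℝ → ℝ)
    (hF : ∀ z, κ (Iic z) = ENNReal.ofReal (F z)) (hFc : Continuous F)
    (hF0 : ∀ z, 0 ≤ F z) (hF1 : ∀ z, F z ≤ 1) (hFm : Monotone F)
    (z : ℝ) (m : ℕ) :
    ∫⁻ y in Iic z, ((m : ℝ≥0∞) + 1) * (ENNReal.ofReal (1 - F y)) ^ m ∂κ
      = 1 - (ENNReal.ofReal (1 - F z)) ^ (m + 1) := by
  have hmeas : Measurable F := hFc.measurable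
  set c := F z with hc
  have hc0 : 0 ≤ c := hF0 z
  have hc1 : c ≤ 1 := hF1 z
  -- the ENNReal-valued integrand, as a function of u = F y
  set g : ℝ → ℝ≥0∞ := fun u => ((m : ℝ≥0∞) + 1) * (ENNReal.ofReal (1 - u)) ^ m with hg
  have hgmeas : Measurable g :=
    (measurable_const.mul
      ((ENNReal.measurable_ofReal.comp (measurable_const.sub measurable_id)).pow_const m))
  -- a.e. equality of indicators
  have hnull : κ ((F ⁻¹' Iic c) \ Iic z) = 0 := by
    have hsub : Iic z ⊆ F ⁻¹' Iic c := fun y hy => mem_preimage.2 (hFm hy)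
    have h1 : κ (F ⁻¹' Iic c) = ENNReal.ofReal c := by
      have := pileup_map_cdf κ F hF hFc hF0 hF1 hFm
      have h2 : Measure.map F κ (Iic c) = κ (F ⁻¹' Iic c) :=
        Measure.map_apply hmeas measurableSet_Iic
      rw [this] at h2
      rw [← h2, Measure.restrict_apply measurableSet_Iic]
      have : Iic c ∩ Ioc (0:ℝ) 1 = Ioc 0 c := by
        ext x; simp only [mem_inter_iff, mem_Iic, mem_Ioc]
        constructor
        · rintro ⟨h1, h2, h3⟩; exact ⟨h2, h1⟩
        · rintro ⟨h1, h2⟩; exact ⟨h2, h1, h2.trans hc1⟩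
      rw [this, Real.volume_Ioc, sub_zero]
    rw [measure_diff hsub nullMeasurableSet_Iic (measure_ne_top κ _), h1, hF z, ← hc,
      tsub_self]
  have hae : ∀ᵐ y ∂κ, (Iic z).indicator (fun y => g (F y)) y
      = (Iic c).indicator g (F y) := by
    have : ∀ y, y ∉ (F ⁻¹' Iic c) \ Iic z →
        (Iic z).indicator (fun y => g (F y)) y = (Iic c).indicator g (F y) := by
      intro y hy
      by_cases h1 : y ∈ Iic z
      · have hFy : F y ∈ Iic c := hFm h1
        rw [indicator_of_mem h1, indicator_of_mem hFy]
      · rw [indicator_of_notMem h1, indicator_of_notMem]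
        intro hmem
        exact hy ⟨mem_preimage.2 hmem, h1⟩
    filter_upwards [measure_eq_zero_iff_ae_notMem.1 hnull] with y hy using this y hy
  calc ∫⁻ y in Iic z, ((m : ℝ≥0∞) + 1) * (ENNReal.ofReal (1 - F y)) ^ m ∂κ
      = ∫⁻ y, (Iic z).indicator (fun y => g (F y)) y ∂κ := by
        rw [lintegral_indicator measurableSet_Iic]
    _ = ∫⁻ y, (Iic c).indicator g (F y) ∂κ := lintegral_congr_ae hae
    _ = ∫⁻ u, (Iic c).indicator g u ∂(Measure.map F κ) :=
        (lintegral_map (hgmeas.indicator measurableSet_Iic) hmeas).symm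
    _ = ∫⁻ u in Ioc (0:ℝ) 1, (Iic c).indicator g u ∂volume := by
        rw [pileup_map_cdf κ F hF hFc hF0 hF1 hFm]
    _ = ∫⁻ u in Ioc (0:ℝ) c, g u ∂volume := by
        rw [← lintegral_indicator measurableSet_Ioc, ← lintegral_indicator measurableSet_Ioc]
        congr 1
        ext u
        by_cases h1 : u ∈ Ioc (0:ℝ) c
        · rw [indicator_of_mem h1,
            indicator_of_mem (show u ∈ Ioc (0:ℝ) 1 from ⟨h1.1, h1.2.trans hc1⟩),
            indicator_of_mem (show u ∈ Iic c from h1.2)]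
        · by_cases h2 : u ∈ Ioc (0:ℝ) 1
          · rw [indicator_of_notMem h1, indicator_of_mem h2, indicator_of_notMem]
            intro hmem
            exact h1 ⟨h2.1, hmem⟩
          · rw [indicator_of_notMem h1, indicator_of_notMem h2]
    _ = ∫⁻ u in Ioc (0:ℝ) c, ENNReal.ofReal (((m:ℝ) + 1) * (1 - u) ^ m) ∂volume := by
        refine setLIntegral_congr_fun measurableSet_Ioc (fun u hu => ?_)
        rw [hg]
        rw [ENNReal.ofReal_mul (by positivity), ENNReal.ofReal_pow (by linarith [hu.2.trans hc1])]
        congr 1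
        rw [ENNReal.ofReal_add (by positivity) zero_le_one]
        simp
    _ = ENNReal.ofReal (∫ u in Ioc (0:ℝ) c, ((m:ℝ) + 1) * (1 - u) ^ m ∂volume) := by
        rw [← ofReal_integral_eq_lintegral_ofReal]
        · exact (Continuous.integrableOn_Ioc (by continuity))
        · refine (ae_restrict_iff' measurableSet_Ioc).2 (ae_of_all _ fun u hu => ?_)
          have : u ≤ 1 := hu.2.trans hc1
          exact mul_nonneg (by positivity) (pow_nonneg (by linarith) m)
    _ = 1 - (ENNReal.ofReal (1 - c)) ^ (m + 1) := by
        rw [← intervalIntegral.integral_of_le hc0]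
        have : (∫ u in (0:ℝ)..c, ((m:ℝ) + 1) * (1 - u) ^ m) = 1 - (1 - c) ^ (m + 1) := by
          have h1 : (∫ u in (0:ℝ)..c, ((m:ℝ) + 1) * (1 - u) ^ m)
              = ∫ x in (1 - c)..(1 - 0), ((m:ℝ) + 1) * x ^ m := by
            rw [← intervalIntegral.integral_comp_sub_left (fun t => ((m:ℝ) + 1) * t ^ m) 1]
          rw [h1]
          rw [intervalIntegral.integral_const_mul, integral_pow]
          have hm : ((m:ℝ) + 1) ≠ 0 := by positivity
          field_simp
          norm_num
        rw [this, ENNReal.ofReal_sub _ (pow_nonneg (by linarith) _), ENNReal.ofReal_one,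
          ENNReal.ofReal_pow (by linarith)]

end PileupAux

section PileupMain

open Set Filter Topology
open scoped ENNReal NNReal

/-- In the pile-up model, for every bounded measurable `h : ℝ → ℝ`,
`E[h(Y₁)] = E[h(Z) * w(G(Z))]`, where `G` is the cdf of `Z = min{Y_1, …, Y_N}` and
`w u = 1 / Ṁ(M⁻¹(1 - u))`, with `M u = E[u^N]`, `Ṁ u = E[N u^(N-1)]` and `M⁻¹` the
inverse of the bijection `M : [0,1] → [0,1]`. -/
theorem pileup_weighted_moment
    {Ω : Type*} [MeasurableSpace Ω] (μ : Measure Ω) [IsProbabilityMeasure μ]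
    (Y : ℕ → Ω → ℝ) (N : Ω → ℕ) (Z : Ω → ℝ) (F fY : ℝ → ℝ)
    (M Mdot Minv w G : ℝ → ℝ)
    (hYmeas : ∀ k, Measurable (Y k))
    (hNmeas : Measurable N)
    (hiid : iIndepFun Y μ)
    (hident : ∀ k, Measure.map (Y k) μ = Measure.map (Y 0) μ)
    (hN1 : ∀ ω, 1 ≤ N ω)
    (hindep : IndepFun N (fun ω k => Y k ω) μ)
    (hF : ∀ z, F z = (μ {ω | Y 0 ω ≤ z}).toReal)
    (hFcont : Continuous F)
    (hfYmeas : Measurable fY)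
    (hfYpos : ∀ x, 0 ≤ fY x)
    (hdens : ∀ z, F z = ∫ t in Set.Iic z, fY t)
    (hEN : Integrable (fun ω => (N ω : ℝ)) μ)
    (hp1 : μ {ω | N ω = 1} ≠ 0)
    (hZ : ∀ ω (h : (Finset.range (N ω)).Nonempty),
        Z ω = (Finset.range (N ω)).inf' h (fun k => Y k ω))
    (hM : ∀ u, M u = ∫ ω, u ^ N ω ∂μ)
    (hMdot : ∀ u, Mdot u = ∫ ω, (N ω : ℝ) * u ^ (N ω - 1) ∂μ)
    (hMinvmem : ∀ u ∈ Set.Icc (0 : ℝ) 1, Minv u ∈ Set.Icc (0 : ℝ) 1)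
    (hMinvr : ∀ u ∈ Set.Icc (0 : ℝ) 1, M (Minv u) = u)
    (hMinvl : ∀ u ∈ Set.Icc (0 : ℝ) 1, Minv (M u) = u)
    (hw : ∀ u, w u = (Mdot (Minv (1 - u)))⁻¹)
    (hG : ∀ z, G z = (μ {ω | Z ω ≤ z}).toReal) :
    ∀ h : ℝ → ℝ, Measurable h → (∃ C : ℝ, ∀ x, |h x| ≤ C) →
      ∫ ω, h (Y 0 ω) ∂μ = ∫ ω, h (Z ω) * w (G (Z ω)) ∂μ := by
  intro h hmeas _hbd
  -- ## Setup : the law of `Y 0` and basic facts about `F`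
  set κ : Measure ℝ := Measure.map (Y 0) μ with hκdef
  haveI hκprob : IsProbabilityMeasure κ := Measure.isProbabilityMeasure_map (hYmeas 0).aemeasurable
  have hYIic : ∀ z, μ {ω | Y 0 ω ≤ z} = κ (Iic z) := by
    intro z
    rw [hκdef, Measure.map_apply (hYmeas 0) measurableSet_Iic]
    rfl
  have hFIic : ∀ z, κ (Iic z) = ENNReal.ofReal (F z) := by
    intro z
    rw [hF z, hYIic z, ENNReal.ofReal_toReal (measure_ne_top κ _)]
  have hF0 : ∀ z, 0 ≤ F z := fun z => (hF z) ▸ ENNReal.toReal_nonneg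
  have hF1 : ∀ z, F z ≤ 1 := by
    intro z
    rw [hF z]
    have := ENNReal.toReal_mono ENNReal.one_ne_top (prob_le_one (μ := μ) (s := {ω | Y 0 ω ≤ z}))
    simpa using this
  have hFm : Monotone F := by
    intro a b hab
    rw [hF a, hF b]
    exact ENNReal.toReal_mono (measure_ne_top μ _)
      (measure_mono (fun ω hω => le_trans hω hab))
  -- the quantity q z = P(Y > z)
  set q : ℝ → ℝ≥0∞ := fun z => ENNReal.ofReal (1 - F z) with hqdef
  have hq1 : ∀ z, q z ≤ 1 := fun z => ENNReal.ofReal_le_one.2 (by linarith [hF0 z])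
  have hqcompl : ∀ z, q z = 1 - ENNReal.ofReal (F z) := by
    intro z
    show ENNReal.ofReal (1 - F z) = _
    rw [ENNReal.ofReal_sub _ (hF0 z), ENNReal.ofReal_one]
  have hYIoi : ∀ (k : ℕ) z, μ (Y k ⁻¹' Ioi z) = q z := by
    intro k z
    have h1 : μ (Y k ⁻¹' Ioi z) = Measure.map (Y k) μ (Ioi z) :=
      (Measure.map_apply (hYmeas k) measurableSet_Ioi).symm
    rw [h1, hident k, ← compl_Iic, measure_compl measurableSet_Iic (measure_ne_top κ _),
      measure_univ, hFIic z, hqcompl z]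
  -- ## Measurability of Z
  have hinf : ∀ (n : ℕ) (hn : (Finset.range n).Nonempty),
      Measurable fun ω => (Finset.range n).inf' hn (fun k => Y k ω) := by
    intro n hn
    have heq : (fun ω => (Finset.range n).inf' hn (fun k => Y k ω))
        = (Finset.range n).inf' hn (fun k => Y k) := by
      funext ω
      rw [Finset.inf'_apply]
    rw [heq]
    exact Finset.inf'_induction hn _ (fun f hf g hg => hf.inf hg) (fun k _ => hYmeas k)
  have hZmeas : Measurable Z := by
    set f : Ω × ℕ → ℝ := fun p =>
      if hn : (Finset.range p.2).Nonempty then (Finset.range p.2).inf' hn (fun k => Y k p.1)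
      else 0 with hfdef
    have hfm : Measurable f := by
      apply measurable_from_prod_countable_left
      intro n
      by_cases hn : (Finset.range n).Nonempty
      · simpa only [hfdef, dif_pos hn] using hinf n hn
      · simpa only [hfdef, dif_neg hn] using measurable_const
    have : Z = fun ω => f (ω, N ω) := by
      funext ω
      have hn : (Finset.range (N ω)).Nonempty :=
        Finset.nonempty_range_iff.2 (Nat.one_le_iff_ne_zero.1 (hN1 ω))
      rw [hfdef]
      simp only [dif_pos hn]
      exact hZ ω hn
    rw [this]
    exact hfm.comp (measurable_id.prodMk hNmeas)
  -- ## The law of Z : μ {Z ≤ z} = 1 - Q z  where  Q z = ∫⁻ q z ^ N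
  have hSmeas : ∀ n : ℕ, MeasurableSet {ω | N ω = n} := fun n => hNmeas (measurableSet_singleton n)
  have hQeq : ∀ z, ∫⁻ ω, (q z) ^ (N ω) ∂μ = ∑' n : ℕ, μ {ω | N ω = n} * (q z) ^ n := by
    intro z
    have h2 : ∫⁻ ω, (q z) ^ (N ω) ∂μ = ∫⁻ n, (q z) ^ n ∂(Measure.map N μ) :=
      (lintegral_map (f := fun n : ℕ => (q z) ^ n) measurable_from_top hNmeas).symm
    rw [h2, lintegral_countable']
    refine tsum_congr fun n => ?_
    rw [Measure.map_apply hNmeas (measurableSet_singleton n), mul_comm]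
    rfl
  have hQle : ∀ z, ∫⁻ ω, (q z) ^ (N ω) ∂μ ≤ 1 := by
    intro z
    calc ∫⁻ ω, (q z) ^ (N ω) ∂μ ≤ ∫⁻ _, 1 ∂μ :=
      lintegral_mono fun ω => pow_le_one' (hq1 z) _
    _ = 1 := by simp
  have hμZgt : ∀ z, μ {ω | z < Z ω} = ∑' n : ℕ, μ {ω | N ω = n} * (q z) ^ n := by
    intro z
    have hdecomp : {ω | z < Z ω} = ⋃ n : ℕ, ({ω | N ω = n} ∩ ⋂ k ∈ Finset.range n, Y k ⁻¹' Ioi z) := by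
      ext ω
      simp only [mem_setOf_eq, mem_iUnion, mem_inter_iff, mem_iInter, mem_preimage, mem_Ioi]
      constructor
      · intro hω
        refine ⟨N ω, rfl, fun k hk => ?_⟩
        have hn : (Finset.range (N ω)).Nonempty :=
          Finset.nonempty_range_iff.2 (Nat.one_le_iff_ne_zero.1 (hN1 ω))
        have := hZ ω hn ▸ hω
        exact (Finset.lt_inf'_iff hn).1 this k hk
      · rintro ⟨n, hn, hk⟩
        have hne : (Finset.range (N ω)).Nonempty :=
          Finset.nonempty_range_iff.2 (Nat.one_le_iff_ne_zero.1 (hN1 ω))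
        rw [hZ ω hne]
        exact (Finset.lt_inf'_iff hne).2 fun k hkm => hk k (hn ▸ hkm)
    have hEmeas : ∀ n : ℕ, MeasurableSet ({ω | N ω = n} ∩ ⋂ k ∈ Finset.range n, Y k ⁻¹' Ioi z) :=
      fun n => (hSmeas n).inter
        (MeasurableSet.biInter (Finset.range n).countable_toSet
          fun k _ => (hYmeas k) measurableSet_Ioi)
    have hdisj : Pairwise (Function.onFun Disjoint
        fun n => ({ω | N ω = n} ∩ ⋂ k ∈ Finset.range n, Y k ⁻¹' Ioi z)) := by
      intro m n hmn
      refine Set.disjoint_left.2 fun ω hm hn => hmn ?_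
      rw [← hm.1, ← hn.1]
    rw [hdecomp, measure_iUnion hdisj hEmeas]
    refine tsum_congr fun n => ?_
    -- independence of N and the Y-vector
    have hV : Measurable (fun ω (k : ℕ) => Y k ω) := measurable_pi_lambda _ fun k => hYmeas k
    have hBmeas : MeasurableSet {g : ℕ → ℝ | ∀ k ∈ Finset.range n, z < g k} := by
      have : {g : ℕ → ℝ | ∀ k ∈ Finset.range n, z < g k}
          = ⋂ k ∈ Finset.range n, (fun g : ℕ → ℝ => g k) ⁻¹' Ioi z := by
        ext g; simp [mem_iInter]
      rw [this]
      exact MeasurableSet.biInter (Finset.range n).countable_toSet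
        fun k _ => (measurable_pi_apply k) measurableSet_Ioi
    have hpre : (fun ω (k : ℕ) => Y k ω) ⁻¹' {g : ℕ → ℝ | ∀ k ∈ Finset.range n, z < g k}
        = ⋂ k ∈ Finset.range n, Y k ⁻¹' Ioi z := by
      ext ω; simp [mem_iInter]
    have hind := hindep.measure_inter_preimage_eq_mul {n}
      {g : ℕ → ℝ | ∀ k ∈ Finset.range n, z < g k}
      (measurableSet_singleton n) hBmeas
    rw [hpre] at hind
    have hNn : N ⁻¹' {n} = {ω | N ω = n} := rfl
    rw [hNn] at hind
    rw [hind]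
    congr 1
    -- iid product
    have := hiid.meas_biInter (S := Finset.range n)
      (s := fun k => Y k ⁻¹' Ioi z) (fun k _ => ⟨Ioi z, measurableSet_Ioi, rfl⟩)
    rw [this]
    have : ∀ k ∈ Finset.range n, μ (Y k ⁻¹' Ioi z) = q z := fun k _ => hYIoi k z
    rw [Finset.prod_congr rfl this, Finset.prod_const, Finset.card_range]
  have hμZle : ∀ z, μ {ω | Z ω ≤ z} = 1 - ∫⁻ ω, (q z) ^ (N ω) ∂μ := by
    intro z
    have hc : {ω | Z ω ≤ z} = {ω | z < Z ω}ᶜ := by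
      ext ω; simp [not_lt]
    rw [hc, measure_compl (show MeasurableSet {ω | z < Z ω} from hZmeas measurableSet_Ioi)
      (measure_ne_top μ _), measure_univ, hμZgt z, hQeq z]
  -- ## Integrability / positivity facts for Mdot
  have hNg : ∀ (f : ℕ → ℝ), Measurable fun ω => f (N ω) :=
    fun f => measurable_from_top.comp hNmeas
  have hNgE : ∀ (f : ℕ → ℝ≥0∞), Measurable fun ω => f (N ω) :=
    fun f => measurable_from_top.comp hNmeas
  have hMdint : ∀ u : ℝ, 0 ≤ u → u ≤ 1 →
      Integrable (fun ω => (N ω : ℝ) * u ^ (N ω - 1)) μ := by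
    intro u hu0 hu1
    refine hEN.mono' ((hNg (fun n => (n : ℝ) * u ^ (n - 1))).aestronglyMeasurable)
      (ae_of_all _ fun ω => ?_)
    rw [Real.norm_eq_abs, abs_of_nonneg (by positivity)]
    calc (N ω : ℝ) * u ^ (N ω - 1) ≤ (N ω : ℝ) * 1 :=
          mul_le_mul_of_nonneg_left (pow_le_one₀ hu0 hu1) (by positivity)
    _ = (N ω : ℝ) := mul_one _
  have hMd0 : ∀ u : ℝ, 0 ≤ u → 0 ≤ Mdot u := by
    intro u hu0
    rw [hMdot u]
    exact integral_nonneg fun ω => by positivity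
  -- ## D : a measurable ENNReal version of `Mdot (1 - F ·)`
  have hprod : Measurable (fun p : ℝ × Ω =>
      (N p.2 : ℝ≥0∞) * (ENNReal.ofReal (1 - F p.1)) ^ (N p.2 - 1)) := by
    have h1 : Measurable (fun p : ℝ × ℕ =>
        (p.2 : ℝ≥0∞) * (ENNReal.ofReal (1 - F p.1)) ^ (p.2 - 1)) := by
      apply measurable_from_prod_countable_left
      intro n
      show Measurable fun x : ℝ => (n : ℝ≥0∞) * (ENNReal.ofReal (1 - F x)) ^ (n - 1)
      exact measurable_const.mul
        ((ENNReal.measurable_ofReal.comp (measurable_const.sub hFcont.measurable)).pow_const _)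
    exact h1.comp (measurable_fst.prodMk (hNmeas.comp measurable_snd))
  set D : ℝ → ℝ≥0∞ :=
    fun y => ∫⁻ ω, (N ω : ℝ≥0∞) * (ENNReal.ofReal (1 - F y)) ^ (N ω - 1) ∂μ with hDdef
  have hDmeas : Measurable D := hprod.lintegral_prod_right'
  have hDval : ∀ y, D y = ENNReal.ofReal (Mdot (1 - F y)) := by
    intro y
    have hy0 : (0 : ℝ) ≤ 1 - F y := by linarith [hF1 y]
    have hy1 : (1 : ℝ) - F y ≤ 1 := by linarith [hF0 y]
    rw [hMdot (1 - F y),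
      ofReal_integral_eq_lintegral_ofReal (hMdint _ hy0 hy1) (ae_of_all _ fun ω => by positivity)]
    refine lintegral_congr fun ω => ?_
    rw [ENNReal.ofReal_mul (by positivity), ENNReal.ofReal_pow hy0, ENNReal.ofReal_natCast]
  have hDbound : ∀ y, D y ≤ ENNReal.ofReal (∫ ω, (N ω : ℝ) ∂μ) := by
    intro y
    have hy0 : (0 : ℝ) ≤ 1 - F y := by linarith [hF1 y]
    have hy1 : (1 : ℝ) - F y ≤ 1 := by linarith [hF0 y]
    rw [hDval y]
    apply ENNReal.ofReal_le_ofReal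
    rw [hMdot]
    refine integral_mono (hMdint _ hy0 hy1) hEN fun ω => ?_
    calc (N ω : ℝ) * (1 - F y) ^ (N ω - 1) ≤ (N ω : ℝ) * 1 :=
          mul_le_mul_of_nonneg_left (pow_le_one₀ hy0 hy1) (by positivity)
    _ = (N ω : ℝ) := mul_one _
  -- ## the law of Z is `κ.withDensity D`
  set ν : Measure ℝ := κ.withDensity D with hνdef
  haveI hνfin : IsFiniteMeasure ν := by
    constructor
    rw [hνdef, withDensity_apply _ MeasurableSet.univ, setLIntegral_univ]
    calc ∫⁻ y, D y ∂κ ≤ ∫⁻ _, ENNReal.ofReal (∫ ω, (N ω : ℝ) ∂μ) ∂κ :=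
          lintegral_mono fun y => hDbound y
    _ = ENNReal.ofReal (∫ ω, (N ω : ℝ) ∂μ) := by simp
    _ < ⊤ := ENNReal.ofReal_lt_top
  have hmapZ : Measure.map Z μ = ν := by
    haveI : IsProbabilityMeasure (Measure.map Z μ) :=
      Measure.isProbabilityMeasure_map hZmeas.aemeasurable
    refine Measure.ext_of_Iic _ _ fun z => ?_
    rw [Measure.map_apply hZmeas measurableSet_Iic]
    have hL : Z ⁻¹' Iic z = {ω | Z ω ≤ z} := rfl
    rw [hL, hμZle z, hνdef, withDensity_apply _ measurableSet_Iic]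
    have hswap : ∫⁻ y in Iic z, D y ∂κ = ∫⁻ ω, ∫⁻ y in Iic z,
        (N ω : ℝ≥0∞) * (ENNReal.ofReal (1 - F y)) ^ (N ω - 1) ∂κ ∂μ :=
      lintegral_lintegral_swap (hprod.aemeasurable)
    rw [hswap]
    have hinner : ∀ ω, ∫⁻ y in Iic z,
        (N ω : ℝ≥0∞) * (ENNReal.ofReal (1 - F y)) ^ (N ω - 1) ∂κ = 1 - (q z) ^ (N ω) := by
      intro ω
      have hn1 := hN1 ω
      have hcast : (N ω : ℝ≥0∞) = ((N ω - 1 : ℕ) : ℝ≥0∞) + 1 := by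
        rw [← Nat.cast_one (R := ℝ≥0∞), ← Nat.cast_add, Nat.sub_add_cancel hn1]
      have h2 : ∫⁻ y in Iic z,
          (N ω : ℝ≥0∞) * (ENNReal.ofReal (1 - F y)) ^ (N ω - 1) ∂κ
          = ∫⁻ y in Iic z, (((N ω - 1 : ℕ) : ℝ≥0∞) + 1)
            * (ENNReal.ofReal (1 - F y)) ^ (N ω - 1) ∂κ := by
        refine lintegral_congr fun y => ?_
        rw [← hcast]
      rw [h2, pileup_inner κ F hFIic hFcont hF0 hF1 hFm z (N ω - 1),
        Nat.sub_add_cancel hn1]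
    rw [lintegral_congr hinner]
    rw [lintegral_sub (hNgE (fun n => (q z) ^ n)) (lt_of_le_of_lt (hQle z) ENNReal.one_lt_top).ne
      (ae_of_all _ fun ω => pow_le_one' (hq1 z) _), lintegral_one, measure_univ]
  -- ## transfer to Bochner integrals
  have hMdFmeas : Measurable fun y => Mdot (1 - F y) := by
    have heq : (fun y => Mdot (1 - F y)) = fun y => (D y).toReal := by
      funext y
      rw [hDval y, ENNReal.toReal_ofReal (hMd0 _ (by linarith [hF1 y]))]
    rw [heq]
    exact hDmeas.ennreal_toReal
  have hkey : ∀ g : ℝ → ℝ, Measurable g →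
      ∫ ω, g (Z ω) ∂μ = ∫ ω, Mdot (1 - F (Y 0 ω)) * g (Y 0 ω) ∂μ := by
    intro g hg
    have h1 : ∫ ω, g (Z ω) ∂μ = ∫ x, g x ∂(Measure.map Z μ) :=
      (integral_map hZmeas.aemeasurable hg.aestronglyMeasurable).symm
    rw [h1, hmapZ, hνdef]
    set f : ℝ → ℝ≥0 := fun y => (D y).toNNReal with hfdef
    have hfmeas : Measurable f := hDmeas.ennreal_toNNReal
    have hDcoe : (fun y => (f y : ℝ≥0∞)) = D := by
      funext y
      exact ENNReal.coe_toNNReal (by rw [hDval y]; exact ENNReal.ofReal_ne_top)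
    have h2 : κ.withDensity D = κ.withDensity (fun y => (f y : ℝ≥0∞)) := by rw [hDcoe]
    rw [h2, integral_withDensity_eq_integral_smul hfmeas]
    have h3 : ∀ y, f y • g y = Mdot (1 - F y) * g y := by
      intro y
      rw [NNReal.smul_def, smul_eq_mul]
      congr 1
      show (D y).toReal = Mdot (1 - F y)
      rw [hDval y, ENNReal.toReal_ofReal (hMd0 _ (by linarith [hF1 y]))]
    rw [show (fun y => f y • g y) = fun y => Mdot (1 - F y) * g y from funext h3]
    rw [hκdef, integral_map (f := fun y => Mdot (1 - F y) * g y) (hYmeas 0).aemeasurable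
      ((hMdFmeas.mul hg).aestronglyMeasurable)]
    -- ## positivity of Mdot on [0,1]
  have hp1' : 0 < (μ {ω | N ω = 1}).toReal :=
    ENNReal.toReal_pos hp1 (measure_ne_top μ _)
  have hMdlow : ∀ u : ℝ, 0 ≤ u → u ≤ 1 → (μ {ω | N ω = 1}).toReal ≤ Mdot u := by
    intro u h0 h1
    rw [hMdot u]
    have hind : ∫ ω, ({ω | N ω = 1}).indicator (fun _ => (1 : ℝ)) ω ∂μ
        = (μ {ω | N ω = 1}).toReal := by
      rw [integral_indicator_const (1 : ℝ) (hSmeas 1), smul_eq_mul, mul_one]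
      rfl
    rw [← hind]
    refine integral_mono ((integrable_const (1 : ℝ)).indicator (hSmeas 1))
      (hMdint u h0 h1) fun ω => ?_
    by_cases hω : N ω = 1
    · rw [indicator_of_mem (show ω ∈ {ω | N ω = 1} from hω)]
      simp [hω]
    · rw [indicator_of_notMem (show ω ∉ {ω | N ω = 1} from hω)]
      positivity
  have hMdFpos : ∀ x, 0 < Mdot (1 - F x) := fun x =>
    lt_of_lt_of_le hp1' (hMdlow _ (by linarith [hF1 x]) (by linarith [hF0 x]))
  -- ## identification of the weight
  have hQreal : ∀ z, M (1 - F z) = (∫⁻ ω, (q z) ^ (N ω) ∂μ).toReal := by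
    intro z
    have hz0 : (0 : ℝ) ≤ 1 - F z := by linarith [hF1 z]
    have hz1 : (1 : ℝ) - F z ≤ 1 := by linarith [hF0 z]
    have hint : Integrable (fun ω => (1 - F z) ^ (N ω)) μ := by
      refine (integrable_const (1 : ℝ)).mono'
        ((hNg (fun n => (1 - F z) ^ n)).aestronglyMeasurable) (ae_of_all _ fun ω => ?_)
      rw [Real.norm_eq_abs, abs_of_nonneg (by positivity)]
      exact pow_le_one₀ hz0 hz1
    have h1 := ofReal_integral_eq_lintegral_ofReal hint (ae_of_all _ fun ω => by positivity)
    have h2 : ∫⁻ ω, ENNReal.ofReal ((1 - F z) ^ N ω) ∂μ = ∫⁻ ω, (q z) ^ (N ω) ∂μ :=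
      lintegral_congr fun ω => by rw [ENNReal.ofReal_pow hz0]
    rw [hM (1 - F z), ← ENNReal.toReal_ofReal (integral_nonneg (fun ω => by positivity)),
      h1, h2]
  have hwG : ∀ x, w (G x) = (Mdot (1 - F x))⁻¹ := by
    intro x
    have hx0 : (0 : ℝ) ≤ 1 - F x := by linarith [hF1 x]
    have hx1 : (1 : ℝ) - F x ≤ 1 := by linarith [hF0 x]
    have hGx : 1 - G x = M (1 - F x) := by
      rw [hG x, hμZle x, ENNReal.toReal_sub_of_le (hQle x) ENNReal.one_ne_top,
        ENNReal.toReal_one, hQreal x]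
      ring
    rw [hw (G x), hGx, hMinvl (1 - F x) ⟨hx0, hx1⟩]
  -- ## conclusion
  have hstep1 : ∫ ω, h (Z ω) * w (G (Z ω)) ∂μ
      = ∫ ω, (fun x => h x * (Mdot (1 - F x))⁻¹) (Z ω) ∂μ := by
    refine integral_congr_ae (ae_of_all _ fun ω => ?_)
    show h (Z ω) * w (G (Z ω)) = h (Z ω) * (Mdot (1 - F (Z ω)))⁻¹
    rw [hwG]
  rw [hstep1, hkey (fun x => h x * (Mdot (1 - F x))⁻¹) (hmeas.mul hMdFmeas.inv)]
  refine integral_congr_ae (ae_of_all _ fun ω => ?_)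
  have hne := (hMdFpos (Y 0 ω)).ne'
  show h (Y 0 ω) = Mdot (1 - F (Y 0 ω)) * (h (Y 0 ω) * (Mdot (1 - F (Y 0 ω)))⁻¹)
  rw [mul_comm (h (Y 0 ω)), ← mul_assoc, mul_inv_cancel₀ hne, one_mul]

end PileupMain
end

section
/- For every integer m ≥ 1 with Δ_η(m) < ∞ and every t ∈ L²(ℝ) with ‖t‖_{L²} = 1 and supp(t*) ⊆ [−πm, πm], the remainder process satisfies |R̄_n(t)|² ≤ c_w²·Δ_η(m)·‖Ĝ_n − G‖_∞², where ‖Ĝ_n − G‖_∞ = sup_{z∈ℝ} |Ĝ_n(z) − G(z)|. -/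
open MeasureTheory ProbabilityTheory Real

/-- Fourier transform `u*(t) = ∫ e^{-itx} u(x) dx` of a complex-valued function. -/
noncomputable def ft (f : ℝ → ℂ) (t : ℝ) : ℂ :=
  ∫ x : ℝ, Complex.exp (-(t * x) * Complex.I) * f x

/-- Empirical cumulative distribution function of the first `n` values of `z`. -/
noncomputable def empCdf (n : ℕ) (z : ℕ → ℝ) (x : ℝ) : ℝ :=
  (∑ i ∈ Finset.range n, if z i ≤ x then (1 : ℝ) else 0) / n

/-- `Δ_η(m) = (2π)⁻¹ ∫_{-πm}^{πm} |f_η*(u)|⁻² du`. -/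
noncomputable def deltaEta (fη : ℝ → ℝ) (m : ℕ) : ℝ :=
  (2 * π)⁻¹ * ∫ u in (-(π * m))..(π * m), 1 / ‖ft (fun y => (fη y : ℂ)) u‖ ^ 2

/-- The remainder process
`R̄_n(t) = (2πn)⁻¹ ∑_k (∫ t*(-u) e^{-iuZ_k}/f_η*(u) du) (w(Ĝ_n(Z_k)) − w(G(Z_k)))`. -/
noncomputable def rbar {Ω : Type*} (Z : ℕ → Ω → ℝ) (G w fη : ℝ → ℝ) (n : ℕ)
    (t : ℝ → ℝ) (ω : Ω) : ℂ :=
  (((2 * π * n)⁻¹ : ℝ) : ℂ) * ∑ k ∈ Finset.range n,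
    (∫ u : ℝ, ft (fun x => (t x : ℂ)) (-u) * Complex.exp (-(u * Z k ω) * Complex.I)
        / ft (fun y => (fη y : ℂ)) u) *
      ((w (empCdf n (fun i => Z i ω) (Z k ω)) - w (G (Z k ω)) : ℝ) : ℂ)


section Aux
open MeasureTheory Real Filter



lemma norm_phase (u x : ℝ) : ‖Complex.exp (-(↑u * ↑x) * Complex.I)‖ = 1 := by
  have : (-(↑u * ↑x) * Complex.I : ℂ) = ((-(u * x) : ℝ) : ℂ) * Complex.I := by push_cast; ring
  rw [this, Complex.norm_exp_ofReal_mul_I]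

lemma ft_integrand_integrable {f : ℝ → ℂ} (hf : Integrable f) (u : ℝ) :
    Integrable (fun x => Complex.exp (-(↑u * ↑x) * Complex.I) * f x) := by
  refine hf.norm.mono' ?_ ?_
  · exact (Complex.continuous_exp.comp (by fun_prop)).aestronglyMeasurable.mul hf.1
  · filter_upwards with x
    rw [norm_mul, norm_phase, one_mul]

lemma ft_continuous {f : ℝ → ℂ} (hf : Integrable f) : Continuous (ft f) := by
  refine continuous_of_dominated (bound := fun x => ‖f x‖) ?_ ?_ hf.norm ?_
  · exact fun u => (ft_integrand_integrable hf u).1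
  · intro u; filter_upwards with x; rw [norm_mul, norm_phase, one_mul]
  · filter_upwards with x
    exact (Complex.continuous_exp.comp (by fun_prop)).mul continuous_const

lemma ft_norm_le {f : ℝ → ℂ} (u : ℝ) : ‖ft f u‖ ≤ ∫ x, ‖f x‖ := by
  refine le_trans (norm_integral_le_integral_norm _) (le_of_eq ?_)
  congr 1 with x
  rw [norm_mul, norm_phase, one_mul]


-- Gaussian kernel facts
lemma gauss_int {ε : ℝ} (hε : 0 < ε) :
    ∫ s : ℝ, Real.sqrt (π / ε) * rexp (-((4*ε)⁻¹ * s^2)) = 2 * π := by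
  simp_rw [neg_mul_eq_neg_mul]
  rw [integral_const_mul, integral_gaussian]
  rw [← Real.sqrt_mul (by positivity)]
  rw [show π / ε * (π / (4*ε)⁻¹) = (2*π)^2 by field_simp; ring]
  exact Real.sqrt_sq (by positivity)

lemma gauss_ft {ε : ℝ} (hε : 0 < ε) (s : ℝ) :
    ∫ u : ℝ, Complex.exp ((-(ε:ℂ)) * u^2 + (-(s:ℂ)*Complex.I) * u + 0)
      = ((Real.sqrt (π / ε) * rexp (-((4*ε)⁻¹ * s^2)) : ℝ) : ℂ) := by
  rw [integral_cexp_quadratic (by simpa using hε) (-(s:ℂ)*Complex.I) 0]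
  have h1 : ((π:ℂ) / -(-(ε:ℂ))) ^ (1/2 : ℂ) = ((Real.sqrt (π/ε) : ℝ) : ℂ) := by
    rw [neg_neg, Real.sqrt_eq_rpow, Complex.ofReal_cpow (by positivity)]
    norm_num
  have h2 : (0 : ℂ) - (-(s:ℂ)*Complex.I)^2 / (4 * (-(ε:ℂ))) = ((-((4*ε)⁻¹ * s^2) : ℝ) : ℂ) := by
    have : (ε:ℂ) ≠ 0 := by exact_mod_cast hε.ne'
    field_simp
    rw [Complex.I_sq]
    push_cast
    field_simp
    ring
  rw [h1, h2, ← Complex.ofReal_exp, ← Complex.ofReal_mul]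

open Complex in


set_option maxHeartbeats 2000000 in
lemma plancherel_bound {t : ℝ → ℝ} (htmeas : Measurable t) (htint : Integrable t)
    (htL2 : MemLp t 2 (volume : Measure ℝ)) {L : ℝ} (hL : 0 < L)
    (hsupp : ∀ u : ℝ, u ∉ Set.Icc (-L) L → ft (fun x => (t x : ℂ)) u = 0) :
    ∫ u : ℝ, ‖ft (fun x => (t x : ℂ)) u‖ ^ 2 ≤ 2 * π * ∫ x : ℝ, t x ^ 2 := by
  set tc : ℝ → ℂ := fun x => (t x : ℂ) with htc
  set T : ℝ → ℂ := ft tc with hT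
  have htcint : Integrable tc := htint.ofReal
  have hTcont : Continuous T := ft_continuous htcint
  have hT2cont : Continuous fun u => ‖T u‖ ^ 2 := (hTcont.norm).pow 2
  have hT2supp : HasCompactSupport fun u => ‖T u‖ ^ 2 := by
    refine HasCompactSupport.intro (isCompact_Icc (a := -L) (b := L)) fun x hx => ?_
    rw [hsupp x hx]; simp
  have hT2int : Integrable fun u => ‖T u‖ ^ 2 :=
    hT2cont.integrable_of_hasCompactSupport hT2supp
  -- the Gaussian-damped bound
  have key : ∀ ε : ℝ, 0 < ε →
      (∫ u : ℝ, rexp (-(ε * u^2)) * ‖T u‖ ^ 2) ≤ 2 * π * ∫ x : ℝ, t x ^ 2 := by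
    intro ε hε
    set Gε : ℝ → ℝ := fun s => Real.sqrt (π / ε) * rexp (-((4*ε)⁻¹ * s^2)) with hGε
    have hG0 : ∀ s, 0 ≤ Gε s := fun s => by positivity
    have hGcont : Continuous Gε := by fun_prop
    have hGint : Integrable Gε := by
      simp_rw [hGε, neg_mul_eq_neg_mul]
      exact (integrable_exp_neg_mul_sq (by positivity)).const_mul _
    have hGsum : ∫ s : ℝ, Gε s = 2 * π := gauss_int hε
    -- the joint integrand
    set f : ℝ → ℝ × ℝ → ℂ := fun u p =>
      Complex.exp (((-(ε * u^2) : ℝ) : ℂ) + ((-((p.1 - p.2) * u) : ℝ) : ℂ) * Complex.I)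
        * (tc p.1 * tc p.2) with hf
    have hfnorm : ∀ u p, ‖f u p‖ = rexp (-(ε * u^2)) * (‖t p.1‖ * ‖t p.2‖) := by
      intro u p
      rw [hf]
      simp only [norm_mul, Complex.norm_exp]
      have : (((-(ε * u^2) : ℝ) : ℂ) + ((-((p.1 - p.2) * u) : ℝ) : ℂ) * Complex.I).re
          = -(ε * u^2) := by
        rw [Complex.add_re, Complex.ofReal_re, Complex.mul_I_re, Complex.ofReal_im]
        ring
      rw [this]
      simp [htc]
    have hfmeas : AEStronglyMeasurable (Function.uncurry f)
        ((volume : Measure ℝ).prod ((volume : Measure ℝ).prod (volume : Measure ℝ))) := by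
      apply Measurable.aestronglyMeasurable
      apply Measurable.mul
      · exact Complex.measurable_exp.comp <| by fun_prop
      · fun_prop
    have hfint : Integrable (Function.uncurry f)
        ((volume : Measure ℝ).prod ((volume : Measure ℝ).prod (volume : Measure ℝ))) := by
      refine Integrable.mono' (g := fun q => rexp (-(ε * q.1^2)) * (‖t q.2.1‖ * ‖t q.2.2‖))
        ?_ hfmeas ?_
      · have h1 : Integrable (fun u : ℝ => rexp (-(ε * u^2))) := by
          simp_rw [neg_mul_eq_neg_mul]
          exact integrable_exp_neg_mul_sq hε
        exact h1.mul_prod (htint.norm.mul_prod htint.norm)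
      · filter_upwards with q
        rw [Function.uncurry, hfnorm]
    -- complexify and Fubini
    have hms : ∀ z : ℂ, ((‖z‖^2 : ℝ) : ℂ) = z * (starRingEnd ℂ) z := by
      intro z
      rw [Complex.mul_conj]
      norm_cast
      rw [Complex.normSq_eq_norm_sq]
    have hstep1 : ((∫ u : ℝ, rexp (-(ε * u^2)) * ‖T u‖ ^ 2 : ℝ) : ℂ)
        = ∫ u : ℝ, ∫ p : ℝ × ℝ, f u p ∂((volume : Measure ℝ).prod volume) := by
      rw [show ((∫ u : ℝ, rexp (-(ε * u^2)) * ‖T u‖ ^ 2 : ℝ) : ℂ)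
          = ∫ u : ℝ, ((rexp (-(ε * u^2)) * ‖T u‖ ^ 2 : ℝ) : ℂ) from integral_ofReal.symm]
      congr 1 with u
      have hconj : (starRingEnd ℂ) (T u)
          = ∫ x : ℝ, Complex.exp ((↑u * ↑x) * Complex.I) * tc x := by
        have hTu : T u = ∫ x : ℝ, Complex.exp (-(↑u * ↑x) * Complex.I) * tc x := rfl
        rw [hTu, ← integral_conj]
        congr 1 with x
        rw [map_mul, ← Complex.exp_conj]
        congr 1
        · congr 1
          rw [map_mul, map_neg, map_mul, Complex.conj_I, Complex.conj_ofReal,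
            Complex.conj_ofReal]
          ring
        · simp [htc, Complex.conj_ofReal]
      have hTT : T u * (starRingEnd ℂ) (T u) = ∫ p : ℝ × ℝ,
          (Complex.exp (-(↑u * ↑p.1) * Complex.I) * tc p.1)
            * (Complex.exp ((↑u * ↑p.2) * Complex.I) * tc p.2)
            ∂((volume : Measure ℝ).prod volume) := by
        rw [hconj]
        exact (integral_prod_mul _ _).symm
      rw [Complex.ofReal_mul, hms, hTT, ← integral_const_mul]
      congr 1 with p
      have hBC : Complex.exp (-(↑u * ↑p.1) * Complex.I) * Complex.exp ((↑u * ↑p.2) * Complex.I)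
          = Complex.exp (((-((p.1 - p.2) * u) : ℝ) : ℂ) * Complex.I) := by
        rw [← Complex.exp_add]
        congr 1
        push_cast
        ring
      rw [hf]
      simp only []
      rw [Complex.exp_add, Complex.ofReal_exp, ← hBC]
      ring
    have hstep2 : (∫ u : ℝ, ∫ p : ℝ × ℝ, f u p ∂((volume : Measure ℝ).prod volume))
        = ∫ p : ℝ × ℝ, (∫ u : ℝ, f u p) ∂((volume : Measure ℝ).prod volume) :=
      integral_integral_swap hfint
    have hstep3 : ∀ p : ℝ × ℝ, (∫ u : ℝ, f u p)
        = ((Gε (p.1 - p.2) * (t p.1 * t p.2) : ℝ) : ℂ) := by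
      intro p
      have harg : ∀ u : ℝ, (((-(ε * u ^ 2) : ℝ) : ℂ) + ((-((p.1 - p.2) * u) : ℝ) : ℂ) * Complex.I)
          = (-(ε:ℂ)) * (u:ℂ)^2 + (-((p.1 - p.2 : ℝ):ℂ) * Complex.I) * (u:ℂ) + 0 := by
        intro u
        push_cast
        ring
      have h1 : (∫ u : ℝ, f u p) = ∫ u : ℝ, Complex.exp ((-(ε:ℂ)) * (u:ℂ)^2
          + (-((p.1 - p.2 : ℝ):ℂ) * Complex.I) * (u:ℂ) + 0) * (tc p.1 * tc p.2) := by
        refine integral_congr_ae (Filter.Eventually.of_forall fun u => ?_)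
        rw [hf]
        simp only
        rw [harg u]
      rw [h1, integral_mul_const, gauss_ft hε, hGε]
      simp only [htc]
      push_cast
      ring
    have hΦ : (∫ u : ℝ, rexp (-(ε * u^2)) * ‖T u‖ ^ 2)
        = ∫ p : ℝ × ℝ, Gε (p.1 - p.2) * (t p.1 * t p.2)
            ∂((volume : Measure ℝ).prod volume) := by
      have h4 : (∫ p : ℝ × ℝ, (∫ u : ℝ, f u p) ∂((volume : Measure ℝ).prod volume))
          = ∫ p : ℝ × ℝ, ((Gε (p.1 - p.2) * (t p.1 * t p.2) : ℝ) : ℂ)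
              ∂((volume : Measure ℝ).prod volume) :=
        integral_congr_ae (Filter.Eventually.of_forall hstep3)
      have h5 := (hstep1.trans hstep2).trans (h4.trans integral_ofReal)
      exact Complex.ofReal_inj.mp h5
    -- real estimates
    have hmeas1 : AEStronglyMeasurable (fun p : ℝ × ℝ => Gε (p.1 - p.2) * t p.1 ^ 2)
        ((volume : Measure ℝ).prod volume) := by
      apply Measurable.aestronglyMeasurable
      exact (hGcont.measurable.comp (measurable_fst.sub measurable_snd)).mul
        ((htmeas.comp measurable_fst).pow_const 2)
    have hmeas2 : AEStronglyMeasurable (fun p : ℝ × ℝ => Gε (p.1 - p.2) * t p.2 ^ 2)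
        ((volume : Measure ℝ).prod volume) := by
      apply Measurable.aestronglyMeasurable
      exact (hGcont.measurable.comp (measurable_fst.sub measurable_snd)).mul
        ((htmeas.comp measurable_snd).pow_const 2)
    have hfix1 : ∀ x : ℝ, (∫ y : ℝ, Gε (x - y) * t x ^ 2) = 2 * π * t x ^ 2 := by
      intro x
      rw [integral_mul_const, integral_sub_left_eq_self Gε volume x, hGsum]
    have hfix2 : ∀ y : ℝ, (∫ x : ℝ, Gε (x - y) * t y ^ 2) = 2 * π * t y ^ 2 := by
      intro y
      rw [integral_mul_const, integral_sub_right_eq_self Gε y, hGsum]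
    have hint1 : Integrable (fun p : ℝ × ℝ => Gε (p.1 - p.2) * t p.1 ^ 2)
        ((volume : Measure ℝ).prod volume) := by
      rw [integrable_prod_iff hmeas1]
      constructor
      · filter_upwards with x
        exact (hGint.comp_sub_left x).mul_const _
      · have he : (fun x : ℝ => ∫ y : ℝ, ‖Gε (x - y) * t x ^ 2‖) = fun x => 2 * π * t x ^ 2 := by
          funext x
          rw [← hfix1 x]
          congr 1 with y
          exact Real.norm_of_nonneg (by positivity)
        rw [he]
        exact (htL2.integrable_sq).const_mul _
    have hint2 : Integrable (fun p : ℝ × ℝ => Gε (p.1 - p.2) * t p.2 ^ 2)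
        ((volume : Measure ℝ).prod volume) := by
      rw [integrable_prod_iff' hmeas2]
      constructor
      · filter_upwards with y
        exact (hGint.comp_sub_right y).mul_const _
      · have he : (fun y : ℝ => ∫ x : ℝ, ‖Gε (x - y) * t y ^ 2‖) = fun y => 2 * π * t y ^ 2 := by
          funext y
          rw [← hfix2 y]
          congr 1 with x
          exact Real.norm_of_nonneg (by positivity)
        rw [he]
        exact (htL2.integrable_sq).const_mul _
    have hval1 : (∫ p : ℝ × ℝ, Gε (p.1 - p.2) * t p.1 ^ 2 ∂((volume : Measure ℝ).prod volume))
        = 2 * π * ∫ x : ℝ, t x ^ 2 := by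
      rw [integral_prod _ hint1]
      have : (fun x : ℝ => ∫ y : ℝ, Gε (x - y) * t x ^ 2) = fun x => 2 * π * t x ^ 2 :=
        funext hfix1
      rw [this, integral_const_mul]
    have hval2 : (∫ p : ℝ × ℝ, Gε (p.1 - p.2) * t p.2 ^ 2 ∂((volume : Measure ℝ).prod volume))
        = 2 * π * ∫ x : ℝ, t x ^ 2 := by
      rw [integral_prod_symm _ hint2]
      have : (fun y : ℝ => ∫ x : ℝ, Gε (x - y) * t y ^ 2) = fun y => 2 * π * t y ^ 2 :=
        funext hfix2
      rw [this, integral_const_mul]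
    have hcmeas : AEStronglyMeasurable (fun p : ℝ × ℝ => Gε (p.1 - p.2) * (t p.1 * t p.2))
        ((volume : Measure ℝ).prod volume) := by
      apply Measurable.aestronglyMeasurable
      exact (hGcont.measurable.comp (measurable_fst.sub measurable_snd)).mul
        ((htmeas.comp measurable_fst).mul (htmeas.comp measurable_snd))
    have hcross : Integrable (fun p : ℝ × ℝ => Gε (p.1 - p.2) * (t p.1 * t p.2))
        ((volume : Measure ℝ).prod volume) := by
      refine Integrable.mono'
        (g := fun p : ℝ × ℝ => 2⁻¹ * (Gε (p.1 - p.2) * t p.1 ^ 2 + Gε (p.1 - p.2) * t p.2 ^ 2))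
        (((hint1.add hint2).const_mul _)) hcmeas ?_
      filter_upwards with p
      rw [Real.norm_eq_abs, abs_mul, _root_.abs_of_nonneg (hG0 _)]
      have h := hG0 (p.1 - p.2)
      nlinarith [sq_nonneg (|t p.1| - |t p.2|), _root_.sq_abs (t p.1), _root_.sq_abs (t p.2),
        abs_mul (t p.1) (t p.2), abs_nonneg (t p.1 * t p.2)]
    calc (∫ u : ℝ, rexp (-(ε * u^2)) * ‖T u‖ ^ 2)
        = ∫ p : ℝ × ℝ, Gε (p.1 - p.2) * (t p.1 * t p.2)
            ∂((volume : Measure ℝ).prod volume) := hΦ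
      _ ≤ ∫ p : ℝ × ℝ, 2⁻¹ * (Gε (p.1 - p.2) * t p.1 ^ 2 + Gε (p.1 - p.2) * t p.2 ^ 2)
            ∂((volume : Measure ℝ).prod volume) := by
          refine integral_mono hcross ((hint1.add hint2).const_mul _) fun p => ?_
          have h := hG0 (p.1 - p.2)
          nlinarith [sq_nonneg (t p.1 - t p.2), mul_nonneg h (sq_nonneg (t p.1 - t p.2))]
      _ = 2 * π * ∫ x : ℝ, t x ^ 2 := by
          rw [integral_const_mul, integral_add hint1 hint2, hval1, hval2]
          ring
  -- let ε → 0
  have hfin : ∀ ε : ℝ, 0 < ε →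
      (∫ u : ℝ, ‖T u‖ ^ 2) ≤ rexp (ε * L^2) * (2 * π * ∫ x : ℝ, t x ^ 2) := by
    intro ε hε
    have hdamped : Integrable (fun u : ℝ => rexp (-(ε * u^2)) * ‖T u‖ ^ 2) := by
      refine hT2int.mono' ?_ ?_
      · exact ((Real.continuous_exp.comp (by fun_prop)).mul hT2cont).aestronglyMeasurable
      · filter_upwards with u
        rw [Real.norm_of_nonneg (by positivity)]
        have h1 : rexp (-(ε * u^2)) ≤ 1 := Real.exp_le_one_iff.mpr (by nlinarith [sq_nonneg u])
        nlinarith [sq_nonneg ‖T u‖]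
    have hpt : ∀ u : ℝ, ‖T u‖ ^ 2 ≤ rexp (ε * L^2) * (rexp (-(ε * u^2)) * ‖T u‖ ^ 2) := by
      intro u
      by_cases hu : u ∈ Set.Icc (-L) L
      · have hu2 : u^2 ≤ L^2 := sq_le_sq' hu.1 hu.2
        have h1 : (1:ℝ) ≤ rexp (ε * L^2) * rexp (-(ε * u^2)) := by
          rw [← Real.exp_add]
          refine Real.one_le_exp ?_
          nlinarith
        nlinarith [sq_nonneg ‖T u‖]
      · rw [hsupp u hu]
        simp
    calc (∫ u : ℝ, ‖T u‖ ^ 2)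
        ≤ ∫ u : ℝ, rexp (ε * L^2) * (rexp (-(ε * u^2)) * ‖T u‖ ^ 2) :=
          integral_mono hT2int (hdamped.const_mul _) hpt
      _ = rexp (ε * L^2) * ∫ u : ℝ, rexp (-(ε * u^2)) * ‖T u‖ ^ 2 := integral_const_mul _ _
      _ ≤ rexp (ε * L^2) * (2 * π * ∫ x : ℝ, t x ^ 2) := by
          refine mul_le_mul_of_nonneg_left (key ε hε) (Real.exp_nonneg _)
  have htendsto : Filter.Tendsto (fun ε : ℝ => rexp (ε * L^2) * (2 * π * ∫ x : ℝ, t x ^ 2))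
      (nhdsWithin 0 (Set.Ioi 0)) (nhds (2 * π * ∫ x : ℝ, t x ^ 2)) := by
    have hc : Continuous fun ε : ℝ => rexp (ε * L^2) * (2 * π * ∫ x : ℝ, t x ^ 2) := by
      fun_prop
    have h0 := (hc.tendsto 0).mono_left (nhdsWithin_le_nhds (s := Set.Ioi (0:ℝ)))
    simpa using h0
  exact ge_of_tendsto htendsto
    (Filter.eventually_of_mem self_mem_nhdsWithin fun ε hε => hfin ε hε)




end Aux

/-- For every `m ≥ 1` with `Δ_η(m) < ∞` and every `t ∈ L¹ ∩ L²(ℝ)` with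
`‖t‖_{L²} = 1` and Fourier transform supported in `[-πm, πm]`, the remainder process
satisfies `|R̄_n(t)|² ≤ c_w² Δ_η(m) ‖Ĝ_n − G‖_∞²`. -/
theorem remainder_process_pointwise_bound
    {Ω : Type*} [MeasurableSpace Ω] (μ : Measure Ω) [IsProbabilityMeasure μ]
    (n : ℕ) (hn : 0 < n)
    (Z : ℕ → Ω → ℝ) (hZmeas : ∀ i, Measurable (Z i))
    (G : ℝ → ℝ) (hG : ∀ x, G x = (μ {ω | Z 0 ω ≤ x}).toReal)
    (hident : ∀ i, Measure.map (Z i) μ = Measure.map (Z 0) μ)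
    (fη : ℝ → ℝ) (hfηmeas : Measurable fη)
    (hfη0 : ∀ x, 0 ≤ fη x) (hfηint : Integrable fη) (hfηnorm : ∫ x : ℝ, fη x = 1)
    (hfηne : ∀ u : ℝ, ft (fun y => (fη y : ℂ)) u ≠ 0)
    (w : ℝ → ℝ) (cw : ℝ)
    (hwlip : ∀ x ∈ Set.Icc (0 : ℝ) 1, ∀ y ∈ Set.Icc (0 : ℝ) 1, |w x - w y| ≤ cw * |x - y|)
    (m : ℕ) (hm : 1 ≤ m)
    (hΔ : IntervalIntegrable (fun u => 1 / ‖ft (fun y => (fη y : ℂ)) u‖ ^ 2)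
      volume (-(π * m)) (π * m))
    (t : ℝ → ℝ) (htmeas : Measurable t)
    (htint : Integrable t) (htL2 : MemLp t 2 (volume : Measure ℝ))
    (htnorm : (∫ x : ℝ, (t x) ^ 2) = 1)
    (htsupp : ∀ u : ℝ, u ∉ Set.Icc (-(π * m)) (π * m) → ft (fun x => (t x : ℂ)) u = 0)
    (ω : Ω) :
    ‖rbar Z G w fη n t ω‖ ^ 2
      ≤ cw ^ 2 * deltaEta fη m *
          (⨆ x : ℝ, |empCdf n (fun i => Z i ω) x - G x|) ^ 2 :=
  by
  classical
  have hπ : 0 < π := Real.pi_pos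
  have hm1 : (1:ℝ) ≤ (m:ℝ) := by exact_mod_cast hm
  have hL : 0 < π * (m:ℝ) := by nlinarith
  have hn0 : ((n:ℝ)) ≠ 0 := Nat.cast_ne_zero.mpr hn.ne'
  set tc : ℝ → ℂ := fun x => (t x : ℂ) with htc
  set fc : ℝ → ℂ := fun y => (fη y : ℂ) with hfc
  set T : ℝ → ℂ := ft tc with hT
  set F : ℝ → ℂ := ft fc with hF
  have hTcont : Continuous T := ft_continuous htint.ofReal
  have hFcont : Continuous F := ft_continuous hfηint.ofReal
  set L : ℝ := π * (m:ℝ) with hLdef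
  -- Plancherel bound
  have hplanch : (∫ u : ℝ, ‖T u‖ ^ 2) ≤ 2 * π := by
    have h := plancherel_bound htmeas htint htL2 hL htsupp
    rw [htnorm] at h
    simpa using h
  -- the interval integral
  set B : ℝ := ∫ u in Set.Icc (-L) L, 1 / ‖F u‖ ^ 2 with hBdef
  have hBnn : 0 ≤ B :=
    setIntegral_nonneg measurableSet_Icc fun u _ => by positivity
  have hdelta : deltaEta fη m = (2*π)⁻¹ * B := by
    rw [deltaEta, intervalIntegral.integral_of_le (by linarith : -L ≤ L),
      ← integral_Icc_eq_integral_Ioc]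
  have hBint : IntegrableOn (fun u => 1 / ‖F u‖ ^ 2) (Set.Icc (-L) L) := by
    rw [integrableOn_Icc_iff_integrableOn_Ioc]
    exact hΔ.1
  -- square-integrability facts about T
  have hT2int : Integrable (fun u : ℝ => ‖T u‖ ^ 2) := by
    refine ((hTcont.norm).pow 2).integrable_of_hasCompactSupport ?_
    refine HasCompactSupport.intro (isCompact_Icc (a := -L) (b := L)) fun x hx => ?_
    simp only [Pi.pow_apply]
    rw [htsupp x hx]
    simp
  -- the key bound on the inner integral
  have hIbound : ∀ z : ℝ,
      ‖∫ u : ℝ, T (-u) * Complex.exp (-(↑u * ↑z) * Complex.I) / F u‖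
        ≤ Real.sqrt (2*π) * Real.sqrt B := by
    intro z
    set φ : ℝ → ENNReal := fun u => ENNReal.ofReal ‖T (-u)‖ with hφ
    set ψ : ℝ → ENNReal := fun u =>
      (Set.Icc (-L) L).indicator (fun v => ENNReal.ofReal (1/‖F v‖)) u with hψ
    have hφmeas : AEMeasurable φ := by
      apply Measurable.aemeasurable
      exact ENNReal.measurable_ofReal.comp (hTcont.norm.measurable.comp measurable_neg)
    have hψmeas : AEMeasurable ψ := by
      apply Measurable.aemeasurable
      exact (ENNReal.measurable_ofReal.comp
        ((measurable_const.div (hFcont.norm.measurable)))).indicator measurableSet_Icc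
    have hpt : ∀ u : ℝ,
        ENNReal.ofReal ‖T (-u) * Complex.exp (-(↑u * ↑z) * Complex.I) / F u‖ = (φ * ψ) u := by
      intro u
      rw [Pi.mul_apply, hφ, hψ]
      beta_reduce
      by_cases hu : u ∈ Set.Icc (-L) L
      · rw [Set.indicator_of_mem hu, norm_div, norm_mul, norm_phase, mul_one,
          ← ENNReal.ofReal_mul (norm_nonneg _)]
        congr 1
        rw [mul_one_div]
      · have hmu : (-u) ∉ Set.Icc (-L) L := by
          simp only [Set.mem_Icc] at hu ⊢
          intro hc
          exact hu ⟨by linarith [hc.1, hc.2], by linarith [hc.1, hc.2]⟩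
        have h1 : T (-u) = 0 := htsupp (-u) hmu
        rw [Set.indicator_of_notMem hu, h1]
        simp
    have hφ2 : (∫⁻ u : ℝ, φ u ^ (2:ℝ)) ≤ ENNReal.ofReal (2*π) := by
      have hpt2 : ∀ u : ℝ, φ u ^ (2:ℝ) = ENNReal.ofReal (‖T (-u)‖ ^ 2) := by
        intro u
        rw [hφ, ENNReal.ofReal_rpow_of_nonneg (norm_nonneg _) (by norm_num)]
        norm_num
      rw [lintegral_congr hpt2]
      have hint : Integrable (fun u : ℝ => ‖T (-u)‖ ^ 2) := hT2int.comp_neg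
      rw [← ofReal_integral_eq_lintegral_ofReal hint
        (Filter.Eventually.of_forall fun u => by positivity)]
      refine ENNReal.ofReal_le_ofReal ?_
      rw [show (∫ u : ℝ, ‖T (-u)‖ ^ 2) = ∫ u : ℝ, ‖T u‖ ^ 2 from
        integral_neg_eq_self (fun u : ℝ => ‖T u‖ ^ 2) volume]
      exact hplanch
    have hψ2 : (∫⁻ u : ℝ, ψ u ^ (2:ℝ)) = ENNReal.ofReal B := by
      have hpt2 : ∀ u : ℝ, ψ u ^ (2:ℝ)
          = (Set.Icc (-L) L).indicator (fun v => ENNReal.ofReal (1/‖F v‖^2)) u := by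
        intro u
        rw [hψ]
        beta_reduce
        by_cases hu : u ∈ Set.Icc (-L) L
        · rw [Set.indicator_of_mem hu, Set.indicator_of_mem hu,
            ENNReal.ofReal_rpow_of_nonneg (by positivity) (by norm_num)]
          congr 1
          rw [one_div, one_div, ← inv_pow]
          norm_num
        · rw [Set.indicator_of_notMem hu, Set.indicator_of_notMem hu,
            ENNReal.zero_rpow_of_pos (by norm_num)]
      rw [lintegral_congr hpt2, lintegral_indicator measurableSet_Icc,
        ← ofReal_integral_eq_lintegral_ofReal hBint
          (Filter.Eventually.of_forall fun u => by positivity)]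
    have hhold := ENNReal.lintegral_mul_le_Lp_mul_Lq volume
      ((Real.holderConjugate_iff_eq_conjExponent (q := 2) one_lt_two).mpr (by norm_num)) hφmeas hψmeas
    have hrhs : (∫⁻ u : ℝ, φ u ^ (2:ℝ)) ^ (1/2:ℝ) * (∫⁻ u : ℝ, ψ u ^ (2:ℝ)) ^ (1/2:ℝ)
        ≤ ENNReal.ofReal (2*π) ^ (1/2:ℝ) * ENNReal.ofReal B ^ (1/2:ℝ) := by
      exact mul_le_mul' (ENNReal.rpow_le_rpow hφ2 (by norm_num))
        (ENNReal.rpow_le_rpow hψ2.le (by norm_num))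
    have hne : ENNReal.ofReal (2*π) ^ (1/2:ℝ) * ENNReal.ofReal B ^ (1/2:ℝ) ≠ ⊤ := by
      exact ENNReal.mul_ne_top
        (ENNReal.rpow_ne_top_of_nonneg (by norm_num) ENNReal.ofReal_ne_top)
        (ENNReal.rpow_ne_top_of_nonneg (by norm_num) ENNReal.ofReal_ne_top)
    calc ‖∫ u : ℝ, T (-u) * Complex.exp (-(↑u * ↑z) * Complex.I) / F u‖
        ≤ (∫⁻ u : ℝ, ENNReal.ofReal
            ‖T (-u) * Complex.exp (-(↑u * ↑z) * Complex.I) / F u‖).toReal :=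
          norm_integral_le_lintegral_norm _
      _ = (∫⁻ u : ℝ, (φ * ψ) u).toReal := by rw [lintegral_congr hpt]
      _ ≤ (ENNReal.ofReal (2*π) ^ (1/2:ℝ) * ENNReal.ofReal B ^ (1/2:ℝ)).toReal :=
          ENNReal.toReal_mono hne (hhold.trans hrhs)
      _ = Real.sqrt (2*π) * Real.sqrt B := by
          rw [ENNReal.toReal_mul, ← ENNReal.toReal_rpow, ← ENNReal.toReal_rpow,
            ENNReal.toReal_ofReal (by positivity), ENNReal.toReal_ofReal hBnn,
            Real.sqrt_eq_rpow, Real.sqrt_eq_rpow]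
  -- bounds on the empirical cdf and G
  set emp : ℝ → ℝ := empCdf n (fun i => Z i ω) with hemp
  have hemp01 : ∀ x, 0 ≤ emp x ∧ emp x ≤ 1 := by
    intro x
    constructor
    · apply div_nonneg _ (Nat.cast_nonneg n)
      apply Finset.sum_nonneg
      intro i _
      split <;> norm_num
    · rw [hemp, empCdf, div_le_one (by exact_mod_cast hn)]
      calc (∑ i ∈ Finset.range n, if (fun i => Z i ω) i ≤ x then (1:ℝ) else 0)
          ≤ ∑ i ∈ Finset.range n, (1:ℝ) := by
            apply Finset.sum_le_sum
            intro i _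
            split <;> norm_num
        _ = n := by simp
  have hG01 : ∀ x, 0 ≤ G x ∧ G x ≤ 1 := by
    intro x
    rw [hG x]
    refine ⟨ENNReal.toReal_nonneg, ?_⟩
    have h1 : μ {ω | Z 0 ω ≤ x} ≤ 1 := prob_le_one
    calc (μ {ω | Z 0 ω ≤ x}).toReal ≤ (1:ENNReal).toReal :=
        ENNReal.toReal_mono ENNReal.one_ne_top h1
      _ = 1 := ENNReal.toReal_one
  set S : ℝ := ⨆ x : ℝ, |emp x - G x| with hSdef
  have hbdd : BddAbove (Set.range fun x => |emp x - G x|) := by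
    refine ⟨2, ?_⟩
    rintro r ⟨x, rfl⟩
    have h1 := hemp01 x
    have h2 := hG01 x
    show |emp x - G x| ≤ 2
    rw [abs_le]
    exact ⟨by linarith [h1.1, h1.2, h2.1, h2.2], by linarith [h1.1, h1.2, h2.1, h2.2]⟩
  have hSx : ∀ x, |emp x - G x| ≤ S := fun x => le_ciSup hbdd x
  have hS0 : 0 ≤ S := (abs_nonneg _).trans (hSx 0)
  have hcw : 0 ≤ cw := by
    have h := hwlip 0 ⟨le_rfl, zero_le_one⟩ 1 ⟨zero_le_one, le_rfl⟩
    have h1 : |(0:ℝ) - 1| = 1 := by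
      rw [abs_sub_comm]
      norm_num
    rw [h1, mul_one] at h
    exact (abs_nonneg _).trans h
  have hW : ∀ k, |w (emp (Z k ω)) - w (G (Z k ω))| ≤ cw * S := by
    intro k
    refine (hwlip _ ⟨(hemp01 _).1, (hemp01 _).2⟩ _ ⟨(hG01 _).1, (hG01 _).2⟩).trans ?_
    exact mul_le_mul_of_nonneg_left (hSx _) hcw
  -- assemble
  have hbound1 : ‖rbar Z G w fη n t ω‖
      ≤ (2*π*(n:ℝ))⁻¹ * ((n:ℝ) * (Real.sqrt (2*π) * Real.sqrt B * (cw * S))) := by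
    rw [rbar]
    rw [norm_mul, Complex.norm_real, Real.norm_eq_abs,
      abs_of_nonneg (by positivity : (0:ℝ) ≤ (2*π*(n:ℝ))⁻¹)]
    refine le_trans (mul_le_mul_of_nonneg_left (norm_sum_le _ _) (by positivity)) ?_
    refine mul_le_mul_of_nonneg_left ?_ (by positivity)
    have hterm : ∀ k ∈ Finset.range n,
        ‖(∫ u : ℝ, ft (fun x => ((t x : ℝ) : ℂ)) (-u)
            * Complex.exp (-(↑u * ↑(Z k ω)) * Complex.I) / ft (fun y => ((fη y : ℝ) : ℂ)) u)
          * ((w (empCdf n (fun i => Z i ω) (Z k ω)) - w (G (Z k ω)) : ℝ) : ℂ)‖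
          ≤ Real.sqrt (2*π) * Real.sqrt B * (cw * S) := by
      intro k _
      rw [norm_mul, Complex.norm_real, Real.norm_eq_abs]
      exact mul_le_mul (hIbound (Z k ω)) (hW k) (abs_nonneg _) (by positivity)
    refine le_trans (Finset.sum_le_card_nsmul _ _ _ hterm) ?_
    rw [Finset.card_range, nsmul_eq_mul]
  have hsq := pow_le_pow_left₀ (norm_nonneg _) hbound1 2
  refine hsq.trans (le_of_eq ?_)
  rw [hdelta]
  have h2π : Real.sqrt (2*π) ^ 2 = 2*π := Real.sq_sqrt (by positivity)
  have hBs : Real.sqrt B ^ 2 = B := Real.sq_sqrt hBnn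
  rw [mul_pow, mul_pow, mul_pow, mul_pow, h2π, hBs]
  field_simp
end
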